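/- Define χ(x) := θ(x) + θ(√x) + θ(x^{1/3}) + ⋯ where θ is the Chebyshev theta function. Then for all real x > 1, χ(x) − χ(x/2) < x. -/

import Mathlib

open Finset Real
open scoped Classical

/-- Chebyshev's first function `θ(x) = ∑_{p ≤ x} ln p`. -/
noncomputable def chebyshevTheta (x : ℝ) : ℝ :=
  ∑ p ∈ (Finset.range (⌊x⌋₊ + 1)).filter Nat.Prime, Real.log p

/-- `χ(x) = θ(x) + θ(√x) + θ(x^{1/3}) + ⋯` (a finite sum since `θ(t) = 0` for `t < 2`). -/
noncomputable def chebyshevChi (x : ℝ) : ℝ :=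
  ∑' k : ℕ, chebyshevTheta (x ^ (((k : ℝ) + 1)⁻¹))

lemma theta_eq_zero {y : ℝ} (hy : y < 2) : chebyshevTheta y = 0 := by
  apply Finset.sum_eq_zero
  intro p hp
  rw [Finset.mem_filter, Finset.mem_range] at hp
  exfalso
  have h2 : 2 ≤ p := hp.2.two_le
  have : ⌊y⌋₊ ≤ 1 := by
    rcases le_or_gt 0 y with h | h
    · have h2' : (⌊y⌋₊ : ℝ) < 2 := (Nat.floor_le h).trans_lt hy
      have : ⌊y⌋₊ < 2 := by exact_mod_cast h2'
      omega
    · simp [Nat.floor_of_nonpos h.le]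
  omega

lemma theta_rpow_eq {x : ℝ} (hx : 0 < x) (j : ℕ) (hj : 0 < j) (N : ℕ) (hN : x < N) :
    chebyshevTheta (x ^ ((j : ℝ)⁻¹)) =
      ∑ p ∈ (Finset.range N).filter (fun p : ℕ => p.Prime ∧ (p : ℝ) ^ j ≤ x), Real.log p := by
  unfold chebyshevTheta
  apply Finset.sum_congr _ (fun _ _ => rfl)
  ext p
  simp only [Finset.mem_filter, Finset.mem_range]
  constructor
  · rintro ⟨hlt, hp⟩
    have hple : p ≤ ⌊x ^ ((j : ℝ)⁻¹)⌋₊ := by omega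
    have hple' : (p : ℝ) ≤ x ^ ((j : ℝ)⁻¹) :=
      (Nat.le_floor_iff (Real.rpow_nonneg hx.le _)).1 hple
    have hpj : (p : ℝ) ^ j ≤ x := by
      have := (Real.le_rpow_inv_iff_of_pos (by positivity) hx.le
        (by exact_mod_cast hj : (0:ℝ) < (j:ℝ))).1 hple'
      rwa [Real.rpow_natCast] at this
    refine ⟨?_, hp, hpj⟩
    have h1 : (1:ℝ) ≤ (p:ℝ) := by exact_mod_cast hp.one_lt.le
    have hsp : (p : ℝ) ≤ (p : ℝ) ^ j := le_self_pow₀ h1 hj.ne'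
    have : (p : ℝ) < N := by linarith
    exact_mod_cast this
  · rintro ⟨_, hp, hpj⟩
    refine ⟨?_, hp⟩
    have : (p : ℝ) ≤ x ^ ((j : ℝ)⁻¹) := by
      rw [Real.le_rpow_inv_iff_of_pos (by positivity) hx.le
        (by exact_mod_cast hj : (0:ℝ) < (j:ℝ)), Real.rpow_natCast]
      exact hpj
    have := Nat.le_floor this
    omega

lemma theta_diff {x : ℝ} (hx : 0 < x) (j : ℕ) (hj : 0 < j) (N : ℕ) (hN : x < N) :
    chebyshevTheta (x ^ ((j : ℝ)⁻¹)) - chebyshevTheta ((x / 2) ^ ((j : ℝ)⁻¹)) =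
      ∑ p ∈ (Finset.range N).filter
        (fun p : ℕ => p.Prime ∧ (p : ℝ) ^ j ≤ x ∧ x / 2 < (p : ℝ) ^ j), Real.log p := by
  rw [theta_rpow_eq hx j hj N hN, theta_rpow_eq (by linarith : (0:ℝ) < x/2) j hj N (by linarith)]
  rw [Finset.sum_filter, Finset.sum_filter, Finset.sum_filter, ← Finset.sum_sub_distrib]
  apply Finset.sum_congr rfl
  intro p _
  by_cases h1 : (p:ℕ).Prime <;> by_cases h2 : (p : ℝ) ^ j ≤ x <;>
    by_cases h3 : (p : ℝ) ^ j ≤ x / 2 <;> by_cases h4 : x / 2 < (p : ℝ) ^ j <;>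
    simp [h1, h2, h3, h4] <;> linarith

lemma chi_eq {x : ℝ} (hx : 0 < x) (K : ℕ) (hK : x < 2 ^ K) :
    chebyshevChi x = ∑ k ∈ Finset.range K, chebyshevTheta (x ^ (((k : ℝ) + 1)⁻¹)) := by
  apply tsum_eq_sum
  intro k hk
  rw [Finset.mem_range, not_lt] at hk
  apply theta_eq_zero
  have h2 : x < 2 ^ (k + 1) := by
    refine hK.trans_le ?_
    exact pow_le_pow_right₀ one_le_two (by omega)
  have hlt : x ^ (((k : ℝ) + 1)⁻¹) < ((2:ℝ) ^ (k + 1)) ^ (((k : ℝ) + 1)⁻¹) :=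
    Real.rpow_lt_rpow hx.le h2 (by positivity)
  refine hlt.trans_le (le_of_eq ?_)
  rw [← Real.rpow_natCast 2 (k + 1), ← Real.rpow_mul (by norm_num)]
  rw [show ((k + 1 : ℕ) : ℝ) = (k : ℝ) + 1 by push_cast; ring]
  rw [mul_inv_cancel₀ (by positivity), Real.rpow_one]

lemma dvd_choose_of_prime_pow {p j n : ℕ} (hp : p.Prime) (hj : 0 < j)
    (h1 : n / 2 < p ^ j) (h2 : p ^ j ≤ n) (h3 : p ^ j ≠ n - n / 2) :
    p ∣ n.choose (n / 2) := by
  haveI : Fact p.Prime := ⟨hp⟩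
  have hn0 : n ≠ 0 := by
    have h2j : 2 ^ j ≤ p ^ j := Nat.pow_le_pow_left hp.two_le j
    have := Nat.one_le_two_pow (n := j)
    omega
  have hC : n.choose (n / 2) ≠ 0 := (Nat.choose_pos (Nat.div_le_self n 2)).ne'
  rw [Nat.Prime.dvd_iff_one_le_factorization hp hC, Nat.factorization_def _ hp]
  rw [padicValNat_choose (Nat.div_le_self n 2) (Nat.lt_succ_self (Nat.log p n))]
  have hjlog : j ≤ Nat.log p n := (Nat.le_log_iff_pow_le hp.one_lt hn0).2 h2
  have hm1 : n / 2 % p ^ j = n / 2 := Nat.mod_eq_of_lt h1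
  have hlt2 : n - n / 2 < p ^ j := by omega
  have hm2 : (n - n / 2) % p ^ j = n - n / 2 := Nat.mod_eq_of_lt hlt2
  have hjmem : j ∈ (Finset.Ico 1 (Nat.log p n + 1)).filter
      (fun i => p ^ i ≤ n / 2 % p ^ i + (n - n / 2) % p ^ i) := by
    rw [Finset.mem_filter, Finset.mem_Ico]
    refine ⟨⟨hj, by omega⟩, ?_⟩
    rw [hm1, hm2]
    omega
  exact Nat.one_le_iff_ne_zero.2 (Finset.card_ne_zero_of_mem hjmem)

lemma key_arith {n : ℕ} (hn : 1 ≤ n) :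
    (n : ℝ) * Real.log 2 + Real.log (((n : ℝ) + 1) / 2) < n := by
  have hlog2 : Real.log 2 < 0.6931471808 := Real.log_two_lt_d9
  rcases eq_or_lt_of_le hn with h1 | h2
  · rw [← h1]
    norm_num
    linarith
  · have hn2 : (2 : ℝ) ≤ (n : ℝ) := by exact_mod_cast h2
    set t : ℝ := ((n : ℝ) + 1) / 2 with ht
    have ht0 : 0 < t := by positivity
    have he : (2.7182818283 : ℝ) < Real.exp 1 := Real.exp_one_gt_d9
    have h1 : Real.log t ≤ t / Real.exp 1 := by
      have hpos : 0 < t / Real.exp 1 := by positivity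
      have := Real.log_le_sub_one_of_pos hpos
      rw [Real.log_div ht0.ne' (Real.exp_ne_zero 1), Real.log_exp] at this
      linarith
    have h2' : t / Real.exp 1 ≤ t / 2.7182818283 :=
      div_le_div_of_nonneg_left ht0.le (by norm_num) he.le
    have h3 : (n : ℝ) * Real.log 2 ≤ (n : ℝ) * 0.6931471808 :=
      mul_le_mul_of_nonneg_left hlog2.le (by positivity)
    have h4 : Real.log t ≤ ((n : ℝ) + 1) * (1 / 5.4365636566) := by
      have : t / 2.7182818283 = ((n : ℝ) + 1) * (1 / 5.4365636566) := by
        rw [ht]; ring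
      linarith
    nlinarith

theorem chebyshevChi_sub_lt (x : ℝ) (hx : 1 < x) :
    chebyshevChi x - chebyshevChi (x / 2) < x := by
  have hx0 : 0 < x := by linarith
  set n := ⌊x⌋₊ with hn
  have hn1 : 1 ≤ n := Nat.le_floor (by exact_mod_cast hx.le)
  have hnx : (n : ℝ) ≤ x := Nat.floor_le hx0.le
  have hxn : x < (n : ℝ) + 1 := by exact_mod_cast Nat.lt_floor_add_one x
  set K := n + 1 with hKdef
  have hK : x < 2 ^ K := by
    have h1 : (n : ℕ) + 1 < 2 ^ (n + 1) := Nat.lt_two_pow_self (n := n + 1)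
    have h2 : ((n : ℝ) + 1) ≤ (2 : ℝ) ^ (n + 1) := by exact_mod_cast h1.le
    calc x < (n : ℝ) + 1 := hxn
    _ ≤ 2 ^ (n + 1) := h2
  have hK2 : x / 2 < 2 ^ K := by
    have : x / 2 < x := by linarith
    linarith
  set F : ℕ → Finset ℕ := fun k => (Finset.range (n + 1)).filter
    (fun p : ℕ => p.Prime ∧ (p : ℝ) ^ (k + 1) ≤ x ∧ x / 2 < (p : ℝ) ^ (k + 1)) with hF
  have hdiff : chebyshevChi x - chebyshevChi (x / 2) =
      ∑ k ∈ Finset.range K, ∑ p ∈ F k, Real.log p := by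
    rw [chi_eq hx0 K hK, chi_eq (by linarith : (0:ℝ) < x/2) K hK2, ← Finset.sum_sub_distrib]
    apply Finset.sum_congr rfl
    intro k _
    have hc : ((k : ℝ) + 1) = (((k + 1 : ℕ) : ℝ)) := by push_cast; ring
    rw [hc, theta_diff hx0 (k + 1) (Nat.succ_pos k) (n + 1) (by push_cast; exact hxn)]
  have hdisj : (↑(Finset.range K) : Set ℕ).PairwiseDisjoint F := by
    intro a _ b _ hab
    simp only [Function.onFun]
    rw [Finset.disjoint_left]
    intro p hpa hpb
    simp only [hF, Finset.mem_filter, Finset.mem_range] at hpa hpb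
    obtain ⟨-, hp, hale, halt⟩ := hpa
    obtain ⟨-, -, hble, hblt⟩ := hpb
    have hp2 : (2 : ℝ) ≤ (p : ℝ) := by exact_mod_cast hp.two_le
    rcases hab.lt_or_gt with h | h
    · have hpow : (p : ℝ) ^ (a + 1) * 2 ≤ (p : ℝ) ^ (b + 1) := by
        have h2 : (2:ℝ) ≤ (p : ℝ) ^ (b - a) :=
          hp2.trans (le_self_pow₀ (by linarith) (by omega))
        calc (p : ℝ) ^ (a + 1) * 2 ≤ (p : ℝ) ^ (a + 1) * (p : ℝ) ^ (b - a) := by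
              apply mul_le_mul_of_nonneg_left h2 (by positivity)
        _ = (p : ℝ) ^ (b + 1) := by rw [← pow_add]; congr 1; omega
      linarith
    · have hpow : (p : ℝ) ^ (b + 1) * 2 ≤ (p : ℝ) ^ (a + 1) := by
        have h2 : (2:ℝ) ≤ (p : ℝ) ^ (a - b) :=
          hp2.trans (le_self_pow₀ (by linarith) (by omega))
        calc (p : ℝ) ^ (b + 1) * 2 ≤ (p : ℝ) ^ (b + 1) * (p : ℝ) ^ (a - b) := by
              apply mul_le_mul_of_nonneg_left h2 (by positivity)
        _ = (p : ℝ) ^ (a + 1) := by rw [← pow_add]; congr 1; omega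
      linarith
  set B : Finset ℕ := (Finset.range K).biUnion F with hB
  have hsumB : ∑ k ∈ Finset.range K, ∑ p ∈ F k, Real.log p = ∑ p ∈ B, Real.log p :=
    (Finset.sum_biUnion hdisj).symm
  have hBmem : ∀ p ∈ B, p.Prime ∧ ∃ j, 0 < j ∧ n / 2 < p ^ j ∧ p ^ j ≤ n := by
    intro p hp
    rw [hB, Finset.mem_biUnion] at hp
    obtain ⟨k, -, hpk⟩ := hp
    simp only [hF, Finset.mem_filter, Finset.mem_range] at hpk
    obtain ⟨-, hprime, hle, hlt⟩ := hpk
    refine ⟨hprime, k + 1, Nat.succ_pos k, ?_, ?_⟩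
    · have hcast : ((n / 2 : ℕ) : ℝ) ≤ (n : ℝ) / 2 := Nat.cast_div_le
      have hfin : ((n / 2 : ℕ) : ℝ) < ((p ^ (k+1) : ℕ) : ℝ) := by
        push_cast
        calc ((n / 2 : ℕ) : ℝ) ≤ (n : ℝ) / 2 := hcast
        _ ≤ x / 2 := by linarith
        _ < (p : ℝ) ^ (k + 1) := hlt
      exact_mod_cast hfin
    · have : ((p ^ (k+1) : ℕ) : ℝ) ≤ x := by push_cast; exact hle
      exact Nat.le_floor this
  set C : ℕ := n.choose (n / 2) with hC
  have hCpos : 0 < C := Nat.choose_pos (Nat.div_le_self n 2)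
  set Bgood : Finset ℕ := B.filter (fun p => p ∣ C) with hBgood
  set Bbad : Finset ℕ := B.filter (fun p => ¬ p ∣ C) with hBbad
  have hsplit : ∑ p ∈ B, Real.log p =
      ∑ p ∈ Bgood, Real.log p + ∑ p ∈ Bbad, Real.log p :=
    (Finset.sum_filter_add_sum_filter_not B _ _).symm
  have hgood : ∑ p ∈ Bgood, Real.log p ≤ (n : ℝ) * Real.log 2 := by
    have hprod : (∏ p ∈ Bgood, p) ∣ C := by
      apply Finset.prod_primes_dvd
      · intro p hp
        rw [hBgood, Finset.mem_filter] at hp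
        exact (hBmem p hp.1).1.prime
      · intro p hp
        rw [hBgood, Finset.mem_filter] at hp
        exact hp.2
    have hpos : 0 < ∏ p ∈ Bgood, p :=
      Finset.prod_pos (fun p hp => ((hBmem p (Finset.mem_filter.1 hp).1).1).pos)
    have hlog : ∑ p ∈ Bgood, Real.log p = Real.log ((∏ p ∈ Bgood, p : ℕ) : ℝ) := by
      rw [Nat.cast_prod, Real.log_prod]
      intro p hp
      rw [hBgood, Finset.mem_filter] at hp
      have := (hBmem p hp.1).1.two_le
      positivity
    rw [hlog]
    have hle1 : ((∏ p ∈ Bgood, p : ℕ) : ℝ) ≤ (C : ℝ) := by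
      exact_mod_cast Nat.le_of_dvd hCpos hprod
    have hle2 : (C : ℝ) ≤ (2 : ℝ) ^ n := by
      have : C ≤ 2 ^ n := by
        rw [hC, ← Nat.sum_range_choose n]
        exact Finset.single_le_sum (fun i _ => Nat.zero_le _)
          (Finset.mem_range.2 (Nat.lt_succ_of_le (Nat.div_le_self n 2)))
      exact_mod_cast this
    calc Real.log ((∏ p ∈ Bgood, p : ℕ) : ℝ) ≤ Real.log ((2:ℝ) ^ n) :=
          Real.log_le_log (by exact_mod_cast hpos) (hle1.trans hle2)
    _ = (n : ℝ) * Real.log 2 := by rw [Real.log_pow]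
  have hbadkey : ∀ p ∈ Bbad, p.Prime ∧ ∃ j, 0 < j ∧ p ^ j = n - n / 2 := by
    intro p hp
    rw [hBbad, Finset.mem_filter] at hp
    obtain ⟨hpB, hnotdvd⟩ := hp
    obtain ⟨hprime, j, hj, hlt, hle⟩ := hBmem p hpB
    refine ⟨hprime, j, hj, ?_⟩
    by_contra hne
    exact hnotdvd (dvd_choose_of_prime_pow hprime hj hlt hle hne)
  have hbadcard : ∀ p ∈ Bbad, ∀ q ∈ Bbad, p = q := by
    intro p hp q hq
    obtain ⟨hpp, jp, hjp, hep⟩ := hbadkey p hp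
    obtain ⟨hqp, jq, hjq, heq⟩ := hbadkey q hq
    have hd : p ∣ q ^ jq := by rw [heq, ← hep]; exact dvd_pow_self p hjp.ne'
    have := hpp.prime.dvd_of_dvd_pow hd
    exact (Nat.prime_dvd_prime_iff_eq hpp hqp).1 this
  have hbad : ∑ p ∈ Bbad, Real.log p ≤ Real.log (((n : ℝ) + 1) / 2) := by
    have hhalf : (1:ℝ) ≤ ((n : ℝ) + 1) / 2 := by
      have : (1:ℝ) ≤ (n : ℝ) := by exact_mod_cast hn1
      linarith
    rcases Finset.eq_empty_or_nonempty Bbad with he | ⟨p, hp⟩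
    · rw [he, Finset.sum_empty]
      exact Real.log_nonneg hhalf
    · have hsub : Bbad = {p} := by
        apply Finset.eq_singleton_iff_unique_mem.2
        exact ⟨hp, fun q hq => hbadcard q hq p hp⟩
      rw [hsub, Finset.sum_singleton]
      obtain ⟨hpp, j, hj, hej⟩ := hbadkey p hp
      apply Real.log_le_log (by exact_mod_cast hpp.pos)
      have h1 : p ≤ p ^ j := Nat.le_self_pow hj.ne' p
      have h2 : 2 * (n - n / 2) ≤ n + 1 := by omega
      have hple : (p:ℝ) ≤ ((n - n/2 : ℕ) : ℝ) := by exact_mod_cast h1.trans_eq hej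
      have h3 : ((n - n/2 : ℕ) : ℝ) ≤ ((n:ℝ) + 1) / 2 := by
        rw [le_div_iff₀ (by norm_num : (0:ℝ) < 2)]
        calc ((n - n/2 : ℕ) : ℝ) * 2 = ((2 * (n - n/2) : ℕ) : ℝ) := by push_cast; ring
        _ ≤ ((n + 1 : ℕ) : ℝ) := by exact_mod_cast h2
        _ = (n:ℝ) + 1 := by push_cast; ring
      linarith
  rw [hdiff, hsumB, hsplit]
  calc ∑ p ∈ Bgood, Real.log p + ∑ p ∈ Bbad, Real.log p ≤
      (n : ℝ) * Real.log 2 + Real.log (((n : ℝ) + 1) / 2) := add_le_add hgood hbad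
  _ < n := key_arith hn1
  _ ≤ x := hnx
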